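/- Let n ≥ 1 be real, a_r ∈ ℝ with a_r ≠ 0, r > 0. Set K = (√3·(|a_r|/n)·r^{−2/n})^{n−2} and c = 3^{(n−1)/2}·a_r·|a_r|^{n−1}/n^n. Suppose real numbers Δσ_r, Δσ_θ (the jumps of radial and hoop stress across the interface, with zero jumps of σ_z and σ_rz) satisfy the two constitutive jump equations K·((2/3 + (n−1)/2)·Δσ_r + (−1/3 − (n−1)/2)·Δσ_θ) = −c/r² and K·((−1/3 − (n−1)/2)·Δσ_r + (2/3 + (n−1)/2)·Δσ_θ) = c/r². Then Δσ_r = −√3·a_r·|a_r|·n^{−3}·r^{−4/n} and Δσ_θ = √3·a_r·|a_r|·n^{−3}·r^{−4/n}; in particular Δσ_θ = −Δσ_r. -/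

import Mathlib

/-- the constitutive jump equations across the interface
determine the stress jumps uniquely:
`[σ_r] = −√3·a_r·|a_r|·n^{−3}·r^{−4/n}`, `[σ_θ] = √3·a_r·|a_r|·n^{−3}·r^{−4/n}`,
and in particular `[σ_θ] = −[σ_r]`. -/
theorem stmt_7 (n ar r : ℝ) (hn : 1 ≤ n) (har : ar ≠ 0) (hr : 0 < r)
    (K c : ℝ)
    (hK : K = (Real.sqrt 3 * (|ar| / n) * r ^ (-2 / n)) ^ (n - 2))
    (hc : c = 3 ^ ((n - 1) / 2) * ar * |ar| ^ (n - 1) / n ^ n)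
    (Δσr Δσθ : ℝ)
    (h1 : K * ((2 / 3 + (n - 1) / 2) * Δσr + (-(1 / 3) - (n - 1) / 2) * Δσθ) = -(c / r ^ 2))
    (h2 : K * ((-(1 / 3) - (n - 1) / 2) * Δσr + (2 / 3 + (n - 1) / 2) * Δσθ) = c / r ^ 2) :
    Δσr = -(Real.sqrt 3 * ar * |ar| * n ^ (-3 : ℝ) * r ^ (-4 / n)) ∧
    Δσθ = Real.sqrt 3 * ar * |ar| * n ^ (-3 : ℝ) * r ^ (-4 / n) ∧
    Δσθ = -Δσr := by
  have hn0 : (0:ℝ) < n := lt_of_lt_of_le one_pos hn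
  have ha : (0:ℝ) < |ar| := abs_pos.mpr har
  have hKpos : 0 < K := by
    rw [hK]; exact Real.rpow_pos_of_pos (by positivity) _
  have hKne : K ≠ 0 := ne_of_gt hKpos
  have hsum : Δσr + Δσθ = 0 := by
    have h3 : K * ((1/3) * (Δσr + Δσθ)) = 0 := by linear_combination h1 + h2
    rcases mul_eq_zero.mp h3 with h | h
    · exact absurd h hKne
    · rcases mul_eq_zero.mp h with h' | h'
      · norm_num at h'
      · exact h'
  have hθ : Δσθ = -Δσr := by linarith
  have h4 : K * n * Δσr = -(c / r ^ 2) := by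
    rw [hθ] at h1; linear_combination h1
  have h3' : (0:ℝ) ≤ 3 := by norm_num
  -- key rpow identity
  have key : c = K * n * r ^ 2 * (Real.sqrt 3 * ar * |ar| * n ^ (-3 : ℝ) * r ^ (-4 / n)) := by
    rw [hK, hc, Real.sqrt_eq_rpow,
        Real.mul_rpow (by positivity) (by positivity),
        Real.mul_rpow (by positivity) (by positivity),
        Real.div_rpow (abs_nonneg _) hn0.le,
        ← Real.rpow_natCast r 2,
        ← Real.rpow_mul hr.le, ← Real.rpow_mul h3']
    have e3 : (3:ℝ) ^ ((1/2) * (n-2)) * 3 ^ ((1:ℝ)/2) = 3 ^ ((n - 1) / 2) := by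
      rw [← Real.rpow_add (by norm_num : (0:ℝ) < 3)]; ring_nf
    have ea : |ar| ^ (n-2) * |ar| = |ar| ^ (n - 1) := by
      nth_rewrite 2 [← Real.rpow_one |ar|]
      rw [← Real.rpow_add ha]; ring_nf
    have en : n * n ^ (-3:ℝ) / n ^ (n-2) = (n ^ n)⁻¹ := by
      nth_rewrite 1 [← Real.rpow_one n]
      rw [← Real.rpow_add hn0, ← Real.rpow_sub hn0,
          show (1 + -3 - (n-2) : ℝ) = -n by ring, Real.rpow_neg hn0.le]
    have er : r ^ (-2/n * (n-2)) * r ^ ((2:ℕ):ℝ) * r ^ (-4/n) = 1 := by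
      rw [← Real.rpow_add hr, ← Real.rpow_add hr]
      have h0 : (-2/n) * (n-2) + ((2:ℕ):ℝ) + (-4/n) = 0 := by
        field_simp; ring
      rw [h0, Real.rpow_zero]
    rw [div_eq_mul_inv, ← e3, ← ea, ← en]
    linear_combination (-(3 ^ ((1:ℝ)/2 * (n-2)) * 3 ^ ((1:ℝ)/2) * ar *
      (|ar| ^ (n-2) * |ar|) * (n * n ^ (-3:ℝ) / n ^ (n-2)))) * er
  set X := Real.sqrt 3 * ar * |ar| * n ^ (-3 : ℝ) * r ^ (-4 / n) with hX
  have hr2 : (r:ℝ) ^ 2 ≠ 0 := by positivity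
  have hKn : K * n ≠ 0 := by positivity
  have hΔ : Δσr = -X := by
    have h5 : K * n * Δσr = K * n * (-X) := by
      rw [h4, key]
      field_simp
    exact mul_left_cancel₀ hKn h5
  exact ⟨hΔ, by rw [hθ, hΔ, neg_neg], hθ⟩
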